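/- arXiv:gr-qc/0306042 — 4 statements merged into one kernel-verified Lean document; each statement's English description precedes it below -/
import Mathlib

section
/- Let Σ be a 2-dimensional timelike submanifold with lightlike tangent vector fields l⁺, l⁻, g(l⁺,l⁻) = -2, such that ∇_{l⁺}l⁺ and ∇_{l⁻}l⁻ are tangent to Σ. Then the second fundamental form satisfies Π(u,w) = g(u,w)Z for all tangent fields u,w, where Z = -(1/2)P⊥(∇_{l⁺}l⁻); i.e., Σ is totally umbilic. -/
/-- if l⁺, l⁻ are lightlike tangent fields spanning TΣ with
g(l⁺,l⁻) = -2 and ∇_{l⁺}l⁺, ∇_{l⁻}l⁻ tangent to Σ (i.e. annihilated by the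
normal projection P⊥), and P⊥(∇_{l⁺}l⁻) = P⊥(∇_{l⁻}l⁺) (tangency of the Lie
bracket), then Π(u,w) = g(u,w)Z for all tangent fields u = αl⁺ + βl⁻,
w = γl⁺ + δl⁻, with Z = -(1/2)P⊥(∇_{l⁺}l⁻): Σ is totally umbilic. -/
theorem stmt5 {V : Type*} [AddCommGroup V] [Module ℝ V]
    (g : V →ₗ[ℝ] V →ₗ[ℝ] ℝ) (hsymm : ∀ x y, g x y = g y x)
    (lp lm : V) (hlp : g lp lp = 0) (hlm : g lm lm = 0) (hpm : g lp lm = -2)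
    (P : V →ₗ[ℝ] V)
    (hP : ∀ Y, P Y = Y + (1 / 2 : ℝ) • (g lm Y • lp) + (1 / 2 : ℝ) • (g lp Y • lm))
    (D : V →ₗ[ℝ] V →ₗ[ℝ] V) (Pi : V → V → V) (hPi : ∀ u w, Pi u w = P (D u w))
    (hgeop : P (D lp lp) = 0) (hgeom : P (D lm lm) = 0)
    (hbracket : P (D lp lm) = P (D lm lp))
    (Z : V) (hZ : Z = -((1 / 2 : ℝ) • P (D lp lm))) :
    ∀ α β γ δ : ℝ, ∀ u w : V, u = α • lp + β • lm → w = γ • lp + δ • lm →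
      Pi u w = g u w • Z := by
  intro α β γ δ u w hu hw
  subst hu hw hZ
  rw [hPi]
  simp only [map_add, map_smul, LinearMap.add_apply, LinearMap.smul_apply,
    hlp, hlm, hgeop, hgeom, ← hbracket, hsymm lm lp, hpm, smul_eq_mul, smul_zero]
  match_scalars <;> ring
end

section
/- Centrifugal and Coriolis accelerations both vanish for all worldlines in Σ (all velocities v) if and only if P⊥(∇_{l⁺}l⁺) = 0 and P⊥(∇_{l⁻}l⁻) = 0, i.e., if and only if both lightlike congruences l⁺ and l⁻ on Σ are geodesic. -/
/-- the centrifugal and Coriolis accelerations vanish for all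
worldlines in Σ (all velocities v ∈ (-1,1)) iff P⊥(∇_{l⁺}l⁺) = 0 and
P⊥(∇_{l⁻}l⁻) = 0, i.e. iff both lightlike congruences are geodesic
(∇_{l±}l± a multiple of l±). -/
theorem stmt8 {V : Type*} [AddCommGroup V] [Module ℝ V]
    (g : V →ₗ[ℝ] V →ₗ[ℝ] ℝ) (hsymm : ∀ x y, g x y = g y x)
    (n τ : V) (hn : g n n = -1) (hτ : g τ τ = 1) (hnτ : g n τ = 0)
    (lp lm : V) (hlp : lp = n + τ) (hlm : lm = n - τ)
    (P : V →ₗ[ℝ] V)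
    (hP : ∀ Y, P Y = Y + (1 / 2 : ℝ) • (g lm Y • lp) + (1 / 2 : ℝ) • (g lp Y • lm))
    (D : V →ₗ[ℝ] V →ₗ[ℝ] V)
    -- metric compatibility along the lightlike generators
    (hcp : g lp (D lp lp) = 0) (hcm : g lm (D lm lm) = 0)
    -- centrifugal and Coriolis acceleration as functions of the velocity v
    (acen aCor : ℝ → V)
    (hacen : ∀ v : ℝ, acen v =
      -(((1 / Real.sqrt (1 - v ^ 2)) ^ 2 * v ^ 2) • P (D n n + D τ τ)))
    (haCor : ∀ v : ℝ, aCor v =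
      -(((1 / Real.sqrt (1 - v ^ 2)) ^ 2 * v) • P (D n τ + D τ n))) :
    ((∀ v ∈ Set.Ioo (-1 : ℝ) 1, acen v = 0 ∧ aCor v = 0) ↔
      (P (D lp lp) = 0 ∧ P (D lm lm) = 0)) ∧
    ((P (D lp lp) = 0 ∧ P (D lm lm) = 0) ↔
      ((∃ a : ℝ, D lp lp = a • lp) ∧ (∃ b : ℝ, D lm lm = b • lm))) := by
  have hτn : g τ n = 0 := by rw [hsymm]; exact hnτ
  have Pp : P lp = 0 := by
    rw [hP, hlp, hlm]
    simp [map_add, map_sub, hn, hτ, hnτ, hτn]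
    module
  have Pm : P lm = 0 := by
    rw [hP, hlp, hlm]
    simp [map_add, map_sub, hn, hτ, hnτ, hτn]
    module
  have hDp : P (D lp lp) = P (D n n + D τ τ) + P (D n τ + D τ n) := by
    rw [hlp]; simp [map_add]; abel
  have hDm : P (D lm lm) = P (D n n + D τ τ) - P (D n τ + D τ n) := by
    rw [hlm]; simp [map_add, map_sub]; abel
  have hcoef : ((1 / Real.sqrt (1 - (1/2:ℝ) ^ 2)) ^ 2 : ℝ) = 4/3 := by
    rw [div_pow, one_pow, Real.sq_sqrt (by norm_num)]
    norm_num
  constructor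
  · constructor
    · intro h
      obtain ⟨h1, h2⟩ := h (1/2) (by norm_num)
      rw [hacen, hcoef] at h1
      rw [haCor, hcoef] at h2
      have hA : P (D n n + D τ τ) = 0 := by
        have := neg_eq_zero.mp h1
        rcases smul_eq_zero.mp this with hc | hv
        · norm_num at hc
        · exact hv
      have hB : P (D n τ + D τ n) = 0 := by
        have := neg_eq_zero.mp h2
        rcases smul_eq_zero.mp this with hc | hv
        · norm_num at hc
        · exact hv
      rw [hDp, hDm, hA, hB]; simp
    · rintro ⟨h1, h2⟩ v hv
      have hA : P (D n n + D τ τ) = 0 := by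
        have : (2:ℝ) • P (D n n + D τ τ) = P (D lp lp) + P (D lm lm) := by
          rw [hDp, hDm]; module
        rw [h1, h2, add_zero] at this
        rcases smul_eq_zero.mp this with hc | hv'
        · norm_num at hc
        · exact hv'
      have hB : P (D n τ + D τ n) = 0 := by
        have h3 : (2:ℝ) • P (D n τ + D τ n) = P (D lp lp) - P (D lm lm) := by
          rw [hDp, hDm]; module
        rw [h1, h2, sub_zero] at h3
        rcases smul_eq_zero.mp h3 with hc | hv'
        · norm_num at hc
        · exact hv'
      rw [hacen, haCor, hA, hB]; simp
  · constructor
    · rintro ⟨h1, h2⟩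
      constructor
      · refine ⟨-(1/2 * g lm (D lp lp)), ?_⟩
        have := hP (D lp lp)
        rw [h1, hcp] at this
        have := this.symm
        rw [eq_comm] at this
        -- 0 = Dlplp + (1/2)•(g lm (Dlplp) • lp) + (1/2)•(0 • lm)
        have h4 : (0:V) = D lp lp + (1/2:ℝ) • (g lm (D lp lp) • lp) := by
          simpa using this
        linear_combination (norm := module) -h4
      · refine ⟨-(1/2 * g lp (D lm lm)), ?_⟩
        have := hP (D lm lm)
        rw [h2, hcm] at this
        have h4 : (0:V) = D lm lm + (1/2:ℝ) • (g lp (D lm lm) • lm) := by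
          have h5 : D lm lm + (2⁻¹:ℝ) • (g lp (D lm lm) • lm) = 0 := by
            simpa using this.symm
          rw [eq_comm]; convert h5 using 3; norm_num
        linear_combination (norm := module) -h4
    · rintro ⟨⟨a, ha⟩, ⟨b, hb⟩⟩
      rw [ha, hb, map_smul, map_smul, Pp, Pm]; simp
end

section
/- In 3-dimensional Minkowski space with metric dx² + dy² - dt², a hyperbolic paraboloid (a doubly ruled quadric of the form t = xy after an affine change of coordinates) cannot have both of its rulings consist of lightlike lines. -/
/-- in 3-dimensional Minkowski space (form q(v) = v₁² + v₂² - v₃²),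
a hyperbolic paraboloid — the image of {(x,y,xy)} under an affine bijection,
whose two rulings have direction vectors obtained from (1,0,y) and (0,1,x) —
cannot have both of its rulings consist of lightlike lines: there is no
bijective linear map L such that L(1,0,y) and L(0,1,x) are q-null for all x, y. -/
theorem stmt15
    (q : (Fin 3 → ℝ) → ℝ) (hq : ∀ v, q v = v 0 ^ 2 + v 1 ^ 2 - v 2 ^ 2) :
    ¬ ∃ L : (Fin 3 → ℝ) →ₗ[ℝ] (Fin 3 → ℝ), Function.Bijective L ∧
      (∀ y : ℝ, q (L ![1, 0, y]) = 0) ∧ (∀ x : ℝ, q (L ![0, 1, x]) = 0) := by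
  rintro ⟨L, ⟨hinj, _⟩, h1, _h2⟩
  have hinj' : ∀ v : Fin 3 → ℝ, L v = 0 → v = 0 := by
    intro v hv
    apply hinj
    simpa using hv
  set a := L ![(1:ℝ), 0, 0] with ha
  set c := L ![(0:ℝ), 0, 1] with hc
  have key : ∀ y : ℝ, L ![1, 0, y] = fun i => a i + y * c i := by
    intro y
    have e : (![1, 0, y] : Fin 3 → ℝ) = ![1, 0, 0] + y • ![0, 0, 1] := by
      funext i; fin_cases i <;> simp
    rw [e, map_add, map_smul, ← ha, ← hc]
    funext i
    simp
  have h0 := h1 0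
  have hp := h1 1
  have hm := h1 (-1)
  rw [hq] at h0 hp hm
  simp only [key] at h0 hp hm
  have qa : a 0 ^ 2 + a 1 ^ 2 - a 2 ^ 2 = 0 := by linear_combination h0
  have qc : c 0 ^ 2 + c 1 ^ 2 - c 2 ^ 2 = 0 := by linear_combination (hp + hm) / 2 - h0
  have hB : a 0 * c 0 + a 1 * c 1 - a 2 * c 2 = 0 := by linear_combination (hp - hm) / 4
  have s01 : (a 0 * c 1 - a 1 * c 0) ^ 2 = 0 := by
    linear_combination (c 0 ^ 2 + c 1 ^ 2) * qa + a 2 ^ 2 * qc -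
      (a 0 * c 0 + a 1 * c 1 + a 2 * c 2) * hB
  have m01 : a 0 * c 1 - a 1 * c 0 = 0 := by
    exact pow_eq_zero_iff (two_ne_zero).elim |>.mp s01
  have m02 : a 0 * c 2 - a 2 * c 0 = 0 := by
    have s : (a 0 * c 2 - a 2 * c 0) ^ 2 = 0 := by
      linear_combination (a 0 * c 1 - a 1 * c 0) * m01 - a 0 ^ 2 * qc +
        2 * a 0 * c 0 * hB - c 0 ^ 2 * qa
    exact pow_eq_zero_iff (two_ne_zero).elim |>.mp s
  have m12 : a 1 * c 2 - a 2 * c 1 = 0 := by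
    have s : (a 1 * c 2 - a 2 * c 1) ^ 2 = 0 := by
      linear_combination (a 0 * c 1 - a 1 * c 0) * m01 - a 1 ^ 2 * qc +
        2 * a 1 * c 1 * hB - c 1 ^ 2 * qa
    exact pow_eq_zero_iff (two_ne_zero).elim |>.mp s
  have hminor : ∀ i j : Fin 3, c i * a j = a i * c j := by
    intro i j
    fin_cases i <;> fin_cases j <;>
      simp only [Fin.zero_eta, Fin.mk_one, Fin.reduceFinMk, Fin.isValue] <;>
      linarith [m01, m02, m12]
  have hc0 : ∀ i : Fin 3, c i = 0 := by
    intro i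
    have hv : L ![c i, 0, -(a i)] = 0 := by
      have e : (![c i, 0, -(a i)] : Fin 3 → ℝ) =
          c i • ![1, 0, 0] + (-(a i)) • ![0, 0, 1] := by
        funext j; fin_cases j <;> simp
      rw [e, map_add, map_smul, map_smul, ← ha, ← hc]
      funext j
      simp only [Pi.add_apply, Pi.smul_apply, smul_eq_mul, Pi.zero_apply]
      linarith [hminor i j]
    have := congrFun (hinj' _ hv) 0
    simpa using this
  have hC : (![0, 0, 1] : Fin 3 → ℝ) = 0 := by
    apply hinj'
    rw [← hc]
    funext i
    exact hc0 i
  have := congrFun hC 2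
  simp at this
end

section
/- In the Gödel metric g = -dt² + dx² - (1/2)e^{2√2 ω₀ x}dy² + dz² - 2e^{√2 ω₀ x}dt dy, the vector fields L± = ∂_t ± ∂_z are lightlike, commute ([L⁺,L⁻] = 0), and satisfy ∇_{L±}L± = 0 for the Levi-Civita connection; hence the surfaces {x = const, y = const} are timelike photon 2-surfaces. -/
lemma expderiv (c A B : ℝ) (p v : Fin 4 → ℝ) (hv : v 1 = 0) :
    fderiv ℝ (fun q : Fin 4 → ℝ => A + B * Real.exp (c * q 1)) p v = 0 := by
  have h1 : HasFDerivAt (fun q : Fin 4 → ℝ => c * q 1)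
      (c • (ContinuousLinearMap.proj 1 : (Fin 4 → ℝ) →L[ℝ] ℝ)) p :=
    ((ContinuousLinearMap.proj (R := ℝ) (φ := fun _ : Fin 4 => ℝ) 1).hasFDerivAt).const_smul c
  have h2 : HasFDerivAt (fun q : Fin 4 → ℝ => Real.exp (c * q 1))
      (Real.exp (c * p 1) • c • (ContinuousLinearMap.proj 1 : (Fin 4 → ℝ) →L[ℝ] ℝ)) p :=
    HasDerivAt.comp_hasFDerivAt (f := fun q : Fin 4 → ℝ => c * q 1) p (Real.hasDerivAt_exp (c * p 1)) h1
  have h3 := ((h2.const_mul B).const_add A)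
  rw [h3.fderiv]
  simp [hv]

/-- in the Gödel metric
g = -dt² + dx² - (1/2)e^{2√2ω₀x}dy² + dz² - 2e^{√2ω₀x}dt dy (coordinates
(t,x,y,z)), the constant vector fields L± = ∂_t ± ∂_z are lightlike, commute,
and satisfy ∇_{L±}L± = 0, the latter expressed by the Koszul formula
g(∇_L L, ∂_i) = L g(L,∂_i) - (1/2)∂_i g(L,L) = 0 for all coordinate fields ∂_i;
hence the surfaces {x = const, y = const} are timelike photon 2-surfaces. -/
theorem stmt18 (ω₀ : ℝ) (hω : 0 < ω₀)
    (G : (Fin 4 → ℝ) → (Fin 4 → ℝ) → (Fin 4 → ℝ) → ℝ)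
    (hG : ∀ p v w, G p v w = -(v 0 * w 0) + v 1 * w 1
      - (1 / 2) * Real.exp (2 * Real.sqrt 2 * ω₀ * p 1) * v 2 * w 2 + v 3 * w 3
      - Real.exp (Real.sqrt 2 * ω₀ * p 1) * (v 0 * w 2 + v 2 * w 0))
    (lp lm : Fin 4 → ℝ) (hlp : lp = ![1, 0, 0, 1]) (hlm : lm = ![1, 0, 0, -1]) :
    -- L± are lightlike
    (∀ p, G p lp lp = 0 ∧ G p lm lm = 0) ∧
    -- [L⁺,L⁻] = 0 (as constant vector fields)
    (∀ p : Fin 4 → ℝ,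
      fderiv ℝ (fun _ : Fin 4 → ℝ => lm) p lp
        - fderiv ℝ (fun _ : Fin 4 → ℝ => lp) p lm = 0) ∧
    -- ∇_{L±}L± = 0 via the Koszul formula with the coordinate fields ∂_i
    (∀ p : Fin 4 → ℝ, ∀ i : Fin 4,
      fderiv ℝ (fun q => G q lp (Pi.single i 1)) p lp
          - (1 / 2) * fderiv ℝ (fun q => G q lp lp) p (Pi.single i 1) = 0 ∧
      fderiv ℝ (fun q => G q lm (Pi.single i 1)) p lm
          - (1 / 2) * fderiv ℝ (fun q => G q lm lm) p (Pi.single i 1) = 0) := by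
  subst hlp hlm
  refine ⟨fun p => ?_, fun p => ?_, fun p i => ?_⟩
  · constructor <;> rw [hG] <;> simp
  · simp
  · have hf : ∀ v : Fin 4 → ℝ, fderiv ℝ (fun q => G q ![(1:ℝ),0,0,1] ![1,0,0,1]) p v = 0 := by
      intro v
      have : (fun q => G q ![(1:ℝ),0,0,1] ![1,0,0,1]) = fun _ => (0:ℝ) :=
        funext fun q => by rw [hG]; simp
      rw [this]; simp
    have hf' : ∀ v : Fin 4 → ℝ, fderiv ℝ (fun q => G q ![(1:ℝ),0,0,-1] ![1,0,0,-1]) p v = 0 := by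
      intro v
      have : (fun q => G q ![(1:ℝ),0,0,-1] ![1,0,0,-1]) = fun _ => (0:ℝ) :=
        funext fun q => by rw [hG]; simp
      rw [this]; simp
    have hv : (![1, 0, 0, 1] : Fin 4 → ℝ) 1 = 0 := by norm_num
    have hv' : (![1, 0, 0, -1] : Fin 4 → ℝ) 1 = 0 := by norm_num
    have hi : i = 0 ∨ i = 1 ∨ i = 2 ∨ i = 3 := by omega
    have key : ∀ (L : Fin 4 → ℝ) (A B : ℝ), L 1 = 0 →
        (fun q : Fin 4 → ℝ => G q L (Pi.single i 1))
          = (fun q => A + B * Real.exp (Real.sqrt 2 * ω₀ * q 1)) →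
        fderiv ℝ (fun q => G q L (Pi.single i 1)) p L = 0 := by
      intro L A B hL h
      rw [h]; exact expderiv _ _ _ p _ hL
    rcases hi with hi | hi | hi | hi <;> subst hi <;>
      refine ⟨?_, ?_⟩ <;> simp only [hf, hf', mul_zero, sub_zero]
    · exact key _ (-1) 0 hv (funext fun q => by rw [hG]; simp [Pi.single_apply])
    · exact key _ (-1) 0 hv' (funext fun q => by rw [hG]; simp [Pi.single_apply])
    · exact key _ 0 0 hv (funext fun q => by rw [hG]; simp [Pi.single_apply])
    · exact key _ 0 0 hv' (funext fun q => by rw [hG]; simp [Pi.single_apply])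
    · exact key _ 0 (-1) hv (funext fun q => by rw [hG]; simp [Pi.single_apply])
    · exact key _ 0 (-1) hv' (funext fun q => by rw [hG]; simp [Pi.single_apply])
    · exact key _ 1 0 hv (funext fun q => by rw [hG]; simp [Pi.single_apply])
    · exact key _ (-1) 0 hv' (funext fun q => by rw [hG]; simp [Pi.single_apply])
end
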